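/- Let a, b, l_i, α, p_r > 0 with bαp_r − al_i > 0 (product-of-eigenvalues condition) and suppose u(1 − c i*) > b + l_i/i* where a = u(1−i*−r*) − b, b = β̄ + ui*, c = 1 + αp_r/l_i. Then the trace a i* − l_i of the Jacobian J(i*,r*) = [[i*a, −i*b],[αp_r, −l_i]] is strictly positive, so (i*, r*) is a source (both eigenvalues have positive real part given the positive determinant). -/
import Mathlib


open Matrix

/-- Under the source condition `u(1 − c i*) > b + l_i/i*` and positive
determinant condition `b α p_r − a l_i > 0`, the trace `a i* − l_i` of the
IBIN Jacobian is strictly positive, so both eigenvalues of `J(i*,r*)` have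
positive real part. -/
theorem ibin_source (β α u pr li istar rstar a b c : ℝ)
    (hα : 0 < α) (hpr : 0 < pr) (hli : 0 < li)
    (hipos : 0 < istar) (hrpos : 0 < rstar)
    (hr : rstar = (α * pr / li) * istar)
    (hc : c = 1 + α * pr / li)
    (hb : b = β + u * istar)
    (ha : a = u * (1 - istar - rstar) - b)
    (hbpos : 0 < b)
    (hdet : 0 < b * α * pr - a * li)
    (hsrc : b + li / istar < u * (1 - c * istar))
    (J : Matrix (Fin 2) (Fin 2) ℝ)
    (hJ : J = !![istar * a, -istar * b; α * pr, -li]) :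
    0 < istar * a - li ∧ 0 < Matrix.trace J ∧
    ∀ μ ∈ spectrum ℂ (J.map (Complex.ofReal)), 0 < μ.re := by
  have hci : u * (1 - c * istar) = a + b := by
    rw [hc, ha, hr]; ring
  have hT : 0 < istar * a - li := by
    rw [hci] at hsrc
    have h2 : li / istar < a := by linarith
    have h3 : li < a * istar := (div_lt_iff₀ hipos).mp h2
    nlinarith
  have hD : 0 < istar * (b * α * pr - a * li) := by positivity
  refine ⟨hT, ?_, ?_⟩
  · rw [hJ, Matrix.trace_fin_two]
    simp
    linarith
  · intro μ hμ
    have hdet0 : (algebraMap ℂ (Matrix (Fin 2) (Fin 2) ℂ) μ - J.map Complex.ofReal).det = 0 := by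
      by_contra h
      exact (spectrum.mem_iff.mp hμ)
        ((Matrix.isUnit_iff_isUnit_det _).mpr (isUnit_iff_ne_zero.mpr h))
    rw [hJ] at hdet0
    simp [Matrix.det_fin_two, Matrix.algebraMap_matrix_apply, Matrix.map_apply,
      Matrix.sub_apply] at hdet0
    obtain ⟨T, hTdef⟩ : ∃ T : ℝ, T = istar * a - li := ⟨_, rfl⟩
    obtain ⟨D, hDdef⟩ : ∃ D : ℝ, D = istar * (b * α * pr - a * li) := ⟨_, rfl⟩
    have hT' : 0 < T := hTdef ▸ hT
    have hD' : 0 < D := hDdef ▸ hD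
    have heq : μ^2 - (T : ℂ) * μ + (D : ℂ) = 0 := by
      rw [hTdef, hDdef]
      push_cast
      linear_combination hdet0
    have hre := congrArg Complex.re heq
    have him := congrArg Complex.im heq
    simp [Complex.ext_iff, pow_two, Complex.mul_re, Complex.mul_im] at hre him
    rcases eq_or_ne μ.im 0 with hy | hy
    · rw [hy] at hre
      nlinarith [hre, hT', hD', sq_nonneg μ.re]
    · have hfac : μ.im * (2 * μ.re - T) = 0 := by linarith [him]
      rcases mul_eq_zero.mp hfac with h | h
      · exact absurd h hy
      · linarith
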